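/- arXiv:1506.01218 — 2 statements merged into one kernel-verified Lean document; each statement's English description precedes it below -/
import Mathlib

section
/- Let G be a group, X a G-space, A a C*-algebra, V an A-module, U : G → GL_A(V) a representation, and α : G × X → Inv(Ã) ∩ Z(Ã) a map with α(e,x) = 1 and α(gh, x) = σ(g,h)·α(h,x)·α(g, hx) for a 2-cocycle σ. Let M be a Hilbert A-module, R : X → Lin_A(V; M) a map, and Ũ : G → U_A(M) a σ-multiplier representation such that R(x)U(g) = α(g, g⁻¹x)·Ũ(g)R(g⁻¹x) for all x ∈ X and g ∈ G. Then K defined by K_{x,y}(v,w) := ⟨R(x)v, R(y)w⟩ is a positive (X, α, U)-covariant kernel: (a) for all n, x_1,…,x_n ∈ X and v_1,…,v_n ∈ V, the sum Σ_{j,k} K_{x_j, x_k}(v_j, v_k) ≥ 0 in A; (b) K_{gx, gy}(v,w) = α(g,x)* · K_{x,y}(U(g⁻¹)v, U(g⁻¹)w) · α(g,y) for all g, x, y, v, w. -/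
/-- Left multiplication of an element of the unitalization on the C*-algebra. -/
def lmulU {A : Type*} [NonUnitalNormedRing A] [NormedSpace ℂ A]
    (x : Unitization ℂ A) (a : A) : A := x.fst • a + x.snd * a

/-- Right multiplication of an element of the unitalization on the C*-algebra. -/
def rmulU {A : Type*} [NonUnitalNormedRing A] [NormedSpace ℂ A]
    (a : A) (x : Unitization ℂ A) : A := x.fst • a + a * x.snd

/-- Given a Hilbert `A`-module `M`, a family `R x : V → M` of `A`-linear maps and a
σ-multiplier representation `Ut` of `G` on `M` satisfying the intertwining relation
`R x ∘ U g = α(g, g⁻¹x) • (Ut g ∘ R (g⁻¹ x))`, the kernel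
`K x y v w := ⟨R x v, R y w⟩` is a positive `(X, α, U)`-covariant kernel. -/
theorem dilation_gives_positive_covariant_kernel
    {A G X V M : Type*}
    [NonUnitalNormedRing A] [StarRing A] [CStarRing A]
    [NormedSpace ℂ A] [IsScalarTower ℂ A A] [SMulCommClass ℂ A A] [StarModule ℂ A]
    [Group G] [AddCommGroup V] [Module ℂ V] [AddCommGroup M]
    -- the G-action on X
    (act : G → X → X)
    (hact1 : ∀ x : X, act 1 x = x)
    (hactmul : ∀ (g h : G) (x : X), act (g * h) x = act g (act h x))
    -- the representation U of G on V
    (U : G → V → V)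
    (hU1 : U 1 = id)
    (hUmul : ∀ (g h : G) (v : V), U (g * h) v = U g (U h v))
    -- α and its associated 2-cocycle σ, valued in central (invertible resp. unitary) elements
    (α : G → X → Unitization ℂ A) (σ : G → G → Unitization ℂ A)
    (hα1 : ∀ x : X, α 1 x = 1)
    (hαc : ∀ (g : G) (x : X) (y : Unitization ℂ A), α g x * y = y * α g x)
    (hαinv : ∀ (g : G) (x : X), IsUnit (α g x))
    (hαcoc : ∀ (g h : G) (x : X), α (g * h) x = σ g h * α h x * α g (act h x))
    (hσu : ∀ g h : G, star (σ g h) * σ g h = 1 ∧ σ g h * star (σ g h) = 1)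
    (hσc : ∀ (g h : G) (y : Unitization ℂ A), σ g h * y = y * σ g h)
    -- the Hilbert A-module structure of M
    (inner : M → M → A)
    (actM : M → Unitization ℂ A → M)
    (hactM1 : ∀ m : M, actM m 1 = m)
    (hactMmul : ∀ (m : M) (x y : Unitization ℂ A), actM (actM m x) y = actM m (x * y))
    (hinner_addl : ∀ m m' m'' : M, inner (m + m') m'' = inner m m'' + inner m' m'')
    (hinner_addr : ∀ m m' m'' : M, inner m (m' + m'') = inner m m' + inner m m'')
    (hinner_star : ∀ m m' : M, star (inner m m') = inner m' m)
    (hinner_actr : ∀ (m m' : M) (x : Unitization ℂ A),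
      inner m (actM m' x) = rmulU (inner m m') x)
    (hinner_actl : ∀ (m m' : M) (x : Unitization ℂ A),
      inner (actM m x) m' = lmulU (star x) (inner m m'))
    (hpos : ∀ m : M, ∃ b : A, inner m m = star b * b)
    -- R and the σ-multiplier representation Ut on M
    (R : X → V → M)
    (Ut : G → M → M)
    (hUt1 : Ut 1 = id)
    (hUtmul : ∀ (g h : G) (m : M), Ut g (Ut h m) = actM (Ut (g * h) m) (σ g h))
    (hUtinner : ∀ (g : G) (m m' : M), inner (Ut g m) (Ut g m') = inner m m')
    (hUtsurj : ∀ g : G, Function.Surjective (Ut g))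
    -- the intertwining relation (iii)
    (hR : ∀ (x : X) (g : G) (v : V),
      R x (U g v) = actM (Ut g (R (act g⁻¹ x) v)) (α g (act g⁻¹ x))) :
    -- (a) positivity of the kernel K x y v w := inner (R x v) (R y w)
    (∀ (n : ℕ) (xs : Fin n → X) (vs : Fin n → V), ∃ b : A,
      (∑ j : Fin n, ∑ k : Fin n, inner (R (xs j) (vs j)) (R (xs k) (vs k))) = star b * b) ∧
    -- (b) covariance of the kernel
    (∀ (g : G) (x y : X) (v w : V),
      inner (R (act g x) v) (R (act g y) w) =
        rmulU (lmulU (star (α g x)) (inner (R x (U g⁻¹ v)) (R y (U g⁻¹ w)))) (α g y)) := by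
  constructor
  · intro n xs vs
    obtain ⟨b, hb⟩ := hpos (∑ j : Fin n, R (xs j) (vs j))
    refine ⟨b, ?_⟩
    rw [← hb]
    have hl : ∀ m' : M, inner (∑ j : Fin n, R (xs j) (vs j)) m' =
        ∑ j : Fin n, inner (R (xs j) (vs j)) m' := fun m' =>
      map_sum (AddMonoidHom.mk' (fun m => inner m m') (fun a b => hinner_addl a b m')) _ _
    have hr : ∀ m : M, inner m (∑ k : Fin n, R (xs k) (vs k)) =
        ∑ k : Fin n, inner m (R (xs k) (vs k)) := fun m =>
      map_sum (AddMonoidHom.mk' (fun m' => inner m m') (hinner_addr m)) _ _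
    rw [hl]
    exact Finset.sum_congr rfl fun j _ => (hr _).symm
  · intro g x y v w
    have key : ∀ (z : X) (u : V), R (act g z) u = actM (Ut g (R z (U g⁻¹ u))) (α g z) := by
      intro z u
      have h1 : U g (U g⁻¹ u) = u := by
        rw [← hUmul, mul_inv_cancel, hU1]; rfl
      have h2 := hR (act g z) g (U g⁻¹ u)
      rw [h1, ← hactmul, inv_mul_cancel, hact1] at h2
      exact h2
    rw [key x v, key y w, hinner_actl, hinner_actr, hUtinner]
    set c := inner (R x (U g⁻¹ v)) (R y (U g⁻¹ w)) with hc
    set s := star (α g x)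
    set t := α g y
    show s.fst • (t.fst • c + c * t.snd) + s.snd * (t.fst • c + c * t.snd) =
      t.fst • (s.fst • c + s.snd * c) + (s.fst • c + s.snd * c) * t.snd
    simp only [smul_add, mul_add, add_mul, smul_smul, smul_mul_assoc, mul_smul_comm, mul_assoc]
    rw [mul_comm s.fst t.fst]
    abel
end

section
/- Let (M, π, J, Ũ) be a minimal (β, U)-covariant dilation of S ∈ CP_β^U, and suppose the action β is inner: β_g(b) = u_g b u_g* with unitaries u_g ∈ B, u_e = 1, and u_{gh} = m(g,h) u_g u_h for a central-unitary-valued 2-cocycle m. Define Ū(g) := π(u_g*) Ũ(g) and M(g,h) := π(m(g,h)). Then: (i) Ū(g) commutes with π(b) for all g ∈ G and b ∈ B; (ii) Ū(g) Ū(h) = M(g,h) Ū(gh) for all g, h ∈ G, i.e. Ū is an M-multiplier representation; (iii) Ū(g) J = π(u_g*) J U(g). -/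
/-- For a minimal covariant dilation of a CP map covariant under an inner action
`β g b = u g * b * (u g)*`, the operators `Ū g := π (u g)* ∘ Ut g` commute with the range of
`π`, form an `M`-multiplier representation with `M g h = π (m g h)`, and satisfy
`Ū g ∘ J = π (u g)* ∘ J ∘ U g`. -/
theorem inner_action_dilation_commuting_representation
    {B G V M : Type*}
    [NormedRing B] [StarRing B] [CStarRing B] [NormedAlgebra ℂ B] [StarModule ℂ B]
    [Group G]
    (u : G → B) (m : G → G → B)
    (hu : ∀ g : G, star (u g) * u g = 1 ∧ u g * star (u g) = 1)
    (hue : u 1 = 1)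
    (hm : ∀ g h : G, u (g * h) = m g h * (u g * u h))
    (hmc : ∀ (g h : G) (b : B), m g h * b = b * m g h)
    (hmu : ∀ g h : G, star (m g h) * m g h = 1 ∧ m g h * star (m g h) = 1)
    -- the unital *-homomorphism π (as a multiplicative unital map of operators)
    (π : B → M → M)
    (hπ1 : π 1 = id)
    (hπmul : ∀ (b c : B) (x : M), π (b * c) x = π b (π c x))
    -- the representations U, Ut and the map J of the minimal covariant dilation
    (U : G → V → V)
    (Ut : G → M → M)
    (hUt1 : Ut 1 = id)
    (hUtmul : ∀ (g h : G) (x : M), Ut g (Ut h x) = Ut (g * h) x)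
    (J : V → M)
    (hJU : ∀ (g : G) (v : V), J (U g v) = Ut g (J v))
    (hUtπ : ∀ (g : G) (b : B) (x : M),
      Ut g (π b x) = π (u g * b * star (u g)) (Ut g x)) :
    -- (i) Ū g commutes with every π b
    (∀ (g : G) (b : B) (x : M),
      π (star (u g)) (Ut g (π b x)) = π b (π (star (u g)) (Ut g x))) ∧
    -- (ii) Ū g ∘ Ū h = M(g,h) ∘ Ū(gh)
    (∀ (g h : G) (x : M),
      π (star (u g)) (Ut g (π (star (u h)) (Ut h x))) =
        π (m g h) (π (star (u (g * h))) (Ut (g * h) x))) ∧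
    -- (iii) Ū g ∘ J = π (u g)* ∘ J ∘ U g
    (∀ (g : G) (v : V),
      π (star (u g)) (Ut g (J v)) = π (star (u g)) (J (U g v))) := by
  refine ⟨?_, ?_, ?_⟩
  · intro g b x
    rw [hUtπ, ← hπmul, ← hπmul]
    congr 1
    rw [← mul_assoc, ← mul_assoc, (hu g).1, one_mul]
  · intro g h x
    rw [hUtπ, ← hπmul, ← hπmul, hUtmul]
    congr 1
    have hsm : star (u (g * h)) = star (u h) * star (u g) * star (m g h) := by
      rw [hm g h]; simp [mul_assoc, star_mul]
    rw [hsm]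
    calc star (u g) * (u g * star (u h) * star (u g))
        = star (u h) * star (u g) := by
          rw [← mul_assoc, ← mul_assoc, (hu g).1, one_mul]
      _ = m g h * (star (u h) * star (u g) * star (m g h)) := by
          rw [hmc, mul_assoc, mul_assoc, (hmu g h).1, mul_one]
  · intro g v
    rw [hJU]
end
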